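/- Let P be a smooth manifold, D = D(P) the algebra of differential operators on P, R = C^∞(P), and extend scalars to formal power series in ℏ. An element F = 1⊗_R 1 + ℏB₁ + ℏ²B₂ + ⋯ ∈ (D ⊗_R D)[[ℏ]] (a formal series of bidifferential operators) is a twistor of the Hopf algebroid D[[ℏ]] if and only if the product f *_ℏ g := F(f, g) on R[[ℏ]] is associative with unit the constant function 1, i.e., *_ℏ is a star product on P. -/

import Mathlib

open TensorProduct

noncomputable section

variable (k : Type) {H R : Type} [CommRing k] [Ring H] [Algebra k H] [Ring R] [Algebra k R]

/-- Relation submodule defining `H ⊗_R H` (source = target = `ι`). -/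
def relQ (af bf : R → H) : Submodule k (H ⊗[k] H) :=
  Submodule.span k {z | ∃ (a : R) (x y : H), z = (bf a * x) ⊗ₜ[k] y - x ⊗ₜ[k] (af a * y)}

abbrev HtQ (af bf : R → H) : Type _ := (H ⊗[k] H) ⧸ relQ k af bf

def prQ (af bf : R → H) : H ⊗[k] H →ₗ[k] HtQ k af bf := (relQ k af bf).mkQ

/-- Relation submodule for the triple product `H ⊗_R H ⊗_R H`. -/
def relQ3 (af bf : R → H) : Submodule k ((H ⊗[k] H) ⊗[k] H) :=
  Submodule.span k
    ({w | ∃ (a : R) (x y z : H),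
        w = ((bf a * x) ⊗ₜ[k] y) ⊗ₜ[k] z - (x ⊗ₜ[k] (af a * y)) ⊗ₜ[k] z} ∪
     {w | ∃ (a : R) (x y z : H),
        w = (x ⊗ₜ[k] (bf a * y)) ⊗ₜ[k] z - (x ⊗ₜ[k] y) ⊗ₜ[k] (af a * z)})

abbrev HtQ3 (af bf : R → H) : Type _ := ((H ⊗[k] H) ⊗[k] H) ⧸ relQ3 k af bf

def prQ3 (af bf : R → H) : (H ⊗[k] H) ⊗[k] H →ₗ[k] HtQ3 k af bf := (relQ3 k af bf).mkQ

/-- Representative-level `(Δ ⊗ id)`. -/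
def DL (Δ' : H →ₗ[k] H ⊗[k] H) : H ⊗[k] H →ₗ[k] (H ⊗[k] H) ⊗[k] H :=
  TensorProduct.map Δ' LinearMap.id

/-- Representative-level `(id ⊗ Δ)`. -/
def DR (Δ' : H →ₗ[k] H ⊗[k] H) : H ⊗[k] H →ₗ[k] (H ⊗[k] H) ⊗[k] H :=
  (TensorProduct.assoc k H H H).symm.toLinearMap ∘ₗ TensorProduct.map LinearMap.id Δ'

def aInv : H ⊗[k] (H ⊗[k] H) →ₗ[k] (H ⊗[k] H) ⊗[k] H :=
  (TensorProduct.assoc k H H H).symm.toLinearMap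

/-- Evaluation of a bidifferential operator on a pair of functions:
`(x ⊗ y)(f, g) = μ(x)(f) * μ(y)(g)`. -/
def ev2 (μ : H →ₐ[k] Module.End k R) :
    (H ⊗[k] H) →ₗ[k] R →ₗ[k] R →ₗ[k] R :=
  TensorProduct.lift (LinearMap.mk₂ k
    (fun x y => (LinearMap.mul k R).compl₁₂ (μ x : R →ₗ[k] R) (μ y : R →ₗ[k] R))
    (by intro x₁ x₂ y; apply LinearMap.ext; intro a; apply LinearMap.ext; intro b
        simp [map_add, add_mul])
    (by intro c x y; apply LinearMap.ext; intro a; apply LinearMap.ext; intro b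
        simp [map_smul, smul_mul_assoc])
    (by intro x y₁ y₂; apply LinearMap.ext; intro a; apply LinearMap.ext; intro b
        simp [map_add, mul_add])
    (by intro c x y; apply LinearMap.ext; intro a; apply LinearMap.ext; intro b
        simp [map_smul, mul_smul_comm]))

/-- Evaluation of a tridifferential operator on a triple of functions. -/
def ev3 (μ : H →ₐ[k] Module.End k R) :
    ((H ⊗[k] H) ⊗[k] H) →ₗ[k] R →ₗ[k] R →ₗ[k] R →ₗ[k] R :=
  TensorProduct.lift (LinearMap.mk₂ k
    (fun u w =>
      { toFun := fun f => (LinearMap.mul k R).compl₁₂ (ev2 k μ u f) (μ w : R →ₗ[k] R)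
        map_add' := by
          intro f₁ f₂; apply LinearMap.ext; intro g; apply LinearMap.ext; intro h
          simp [map_add, add_mul]
        map_smul' := by
          intro c f; apply LinearMap.ext; intro g; apply LinearMap.ext; intro h
          simp [map_smul, smul_mul_assoc] })
    (by intro u₁ u₂ w; apply LinearMap.ext; intro f; apply LinearMap.ext; intro g
        apply LinearMap.ext; intro h; simp [map_add, add_mul])
    (by intro c u w; apply LinearMap.ext; intro f; apply LinearMap.ext; intro g
        apply LinearMap.ext; intro h; simp [map_smul, smul_mul_assoc])
    (by intro u w₁ w₂; apply LinearMap.ext; intro f; apply LinearMap.ext; intro g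
        apply LinearMap.ext; intro h; simp [map_add, mul_add])
    (by intro c u w; apply LinearMap.ext; intro f; apply LinearMap.ext; intro g
        apply LinearMap.ext; intro h; simp [map_smul, mul_smul_comm]))

/-- `(ε ⊗_R id)`-type evaluation: `x ⊗ y ↦ ι(ε x) * y`. -/
def e1 (s : R →ₗ[k] H) (ε : H →ₗ[k] R) : (H ⊗[k] H) →ₗ[k] H :=
  TensorProduct.lift (LinearMap.mk₂ k
    (fun x y => s (ε x) * y)
    (by intro x₁ x₂ y; simp [map_add, add_mul])
    (by intro c x y; simp [map_smul, smul_mul_assoc])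
    (by intro x y₁ y₂; simp [mul_add])
    (by intro c x y; simp [mul_smul_comm]))

/-- `(id ⊗_R ε)`-type evaluation: `x ⊗ y ↦ ι(ε y) * x`. -/
def e2 (s : R →ₗ[k] H) (ε : H →ₗ[k] R) : (H ⊗[k] H) →ₗ[k] H :=
  TensorProduct.lift (LinearMap.mk₂ k
    (fun x y => s (ε y) * x)
    (by intro x₁ x₂ y; simp [mul_add])
    (by intro c x y; simp [mul_smul_comm])
    (by intro x y₁ y₂; simp [map_add, add_mul])
    (by intro c x y; simp [map_smul, smul_mul_assoc]))

/-- The star product on `R[[ℏ]]` (formal series represented as coefficient functions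
`ℕ → R`) defined by a formal series `F = Σ ℏⁿ Bₙ` of bidifferential operators:
`f *_ℏ g = F(f, g)`. -/
def starC (μ : H →ₐ[k] Module.End k R) (B : ℕ → H ⊗[k] H) (f g : ℕ → R) : ℕ → R :=
  fun n => ∑ p ∈ Finset.HasAntidiagonal.antidiagonal n, ∑ q ∈ Finset.HasAntidiagonal.antidiagonal p.2,
    ev2 k μ (B p.1) (f q.1) (g q.2)

section Aux
variable {K A S : Type} [CommRing K] [Ring A] [Algebra K A] [CommRing S] [Algebra K S]
variable (μ : A →ₐ[K] Module.End K S)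

lemma st8_ev2_tmul (x y : A) (f g : S) : ev2 K μ (x ⊗ₜ[K] y) f g = μ x f * μ y g := rfl

lemma st8_ev3_tmul (u : A ⊗[K] A) (z : A) (f g h : S) :
    ev3 K μ (u ⊗ₜ[K] z) f g h = ev2 K μ u f g * μ z h := rfl

lemma st8_ev3_sub (U V : (A ⊗[K] A) ⊗[K] A) (f g h : S) :
    ev3 K μ (U - V) f g h = ev3 K μ U f g h - ev3 K μ V f g h := by
  rw [sub_eq_add_neg U V, ← neg_one_smul K V, map_add, map_smul, LinearMap.add_apply,
    LinearMap.add_apply, LinearMap.add_apply, LinearMap.smul_apply, LinearMap.smul_apply,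
    LinearMap.smul_apply, neg_one_smul, sub_eq_add_neg]

lemma st8_e1_tmul (s : S →ₗ[K] A) (ε : A →ₗ[K] S) (x y : A) :
    e1 K s ε (x ⊗ₜ[K] y) = s (ε x) * y := rfl

lemma st8_e2_tmul (s : S →ₗ[K] A) (ε : A →ₗ[K] S) (x y : A) :
    e2 K s ε (x ⊗ₜ[K] y) = s (ε y) * x := rfl



lemma st8_ev2_mul_tmul (w : A ⊗[K] A) (v₁ v₂ : A) (f g : S) :
    ev2 K μ (w * v₁ ⊗ₜ[K] v₂) f g = ev2 K μ w (μ v₁ f) (μ v₂ g) := by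
  induction w using TensorProduct.induction_on with
  | zero => simp
  | tmul x y =>
      rw [Algebra.TensorProduct.tmul_mul_tmul, st8_ev2_tmul, st8_ev2_tmul, map_mul, map_mul]
      rfl
  | add w₁ w₂ h₁ h₂ => rw [add_mul, map_add]; simp [h₁, h₂]

lemma st8_ev3_aInv (x : A) (t : A ⊗[K] A) (f g h : S) :
    ev3 K μ (aInv K (x ⊗ₜ[K] t)) f g h = μ x f * ev2 K μ t g h := by
  induction t using TensorProduct.induction_on with
  | zero =>
      rw [TensorProduct.tmul_zero, map_zero]
      simp
  | tmul t₁ t₂ =>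
      rw [show aInv K (x ⊗ₜ[K] (t₁ ⊗ₜ[K] t₂)) = (x ⊗ₜ[K] t₁) ⊗ₜ[K] t₂ from rfl,
        st8_ev3_tmul, st8_ev2_tmul, st8_ev2_tmul, mul_assoc]
  | add t₁ t₂ h₁ h₂ =>
      rw [TensorProduct.tmul_add, map_add]
      simp only [map_add, LinearMap.add_apply, h₁, h₂, mul_add]

lemma st8_ev3_mul_right (u3 : (A ⊗[K] A) ⊗[K] A) (v₁ v₂ : A) (f g h : S) :
    ev3 K μ (u3 * aInv K ((1 : A) ⊗ₜ[K] (v₁ ⊗ₜ[K] v₂))) f g h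
      = ev3 K μ u3 f (μ v₁ g) (μ v₂ h) := by
  induction u3 using TensorProduct.induction_on with
  | zero => simp
  | tmul w z =>
      rw [show aInv K ((1:A) ⊗ₜ[K] (v₁ ⊗ₜ[K] v₂)) = ((1:A) ⊗ₜ[K] v₁) ⊗ₜ[K] v₂ from rfl,
        Algebra.TensorProduct.tmul_mul_tmul, st8_ev3_tmul, st8_ev3_tmul,
        st8_ev2_mul_tmul, map_mul, map_one]
      rfl
  | add w₁ w₂ h₁ h₂ => rw [add_mul, map_add]; simp [h₁, h₂]

variable (Δ' : A →ₗ[K] A ⊗[K] A)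

lemma st8_E1 (hΔ : ∀ (D : A) (f g : S), ev2 K μ (Δ' D) f g = μ D (f * g))
    (u v : A ⊗[K] A) (f g h : S) :
    ev3 K μ (DL K Δ' u * (v ⊗ₜ[K] (1 : A))) f g h = ev2 K μ u (ev2 K μ v f g) h := by
  induction v using TensorProduct.induction_on with
  | zero => simp
  | tmul v₁ v₂ =>
      induction u using TensorProduct.induction_on with
      | zero => simp [DL]
      | tmul x y =>
          rw [show DL K Δ' (x ⊗ₜ[K] y) = Δ' x ⊗ₜ[K] y from rfl,
            Algebra.TensorProduct.tmul_mul_tmul, st8_ev3_tmul, st8_ev2_mul_tmul,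
            hΔ, mul_one, st8_ev2_tmul, st8_ev2_tmul]
      | add u₁ u₂ h₁ h₂ => rw [map_add, add_mul, map_add]; simp [h₁, h₂]
  | add v₁ v₂ h₁ h₂ =>
      rw [TensorProduct.add_tmul, mul_add, map_add]
      simp only [LinearMap.add_apply, h₁, h₂, map_add]

lemma st8_E2 (hΔ : ∀ (D : A) (f g : S), ev2 K μ (Δ' D) f g = μ D (f * g))
    (u v : A ⊗[K] A) (f g h : S) :
    ev3 K μ (DR K Δ' u * aInv K ((1 : A) ⊗ₜ[K] v)) f g h
      = ev2 K μ u f (ev2 K μ v g h) := by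
  induction v using TensorProduct.induction_on with
  | zero =>
      rw [TensorProduct.tmul_zero, map_zero, mul_zero]
      simp
  | tmul v₁ v₂ =>
      rw [st8_ev3_mul_right]
      induction u using TensorProduct.induction_on with
      | zero => simp [DR]
      | tmul x y =>
          rw [show DR K Δ' (x ⊗ₜ[K] y) = aInv K (x ⊗ₜ[K] Δ' y) from rfl,
            st8_ev3_aInv, hΔ, st8_ev2_tmul, st8_ev2_tmul]
      | add u₁ u₂ h₁ h₂ => rw [map_add, map_add]; simp [h₁, h₂]
  | add v₁ v₂ h₁ h₂ =>
      rw [TensorProduct.tmul_add, map_add, mul_add, map_add]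
      simp only [LinearMap.add_apply, h₁, h₂, map_add]

variable (ι : S →ₐ[K] A)

lemma st8_ev3_rel (hbl : ∀ (a : S) (h : A) (b : S), μ (ι a * h) b = a * μ h b)
    (w : (A ⊗[K] A) ⊗[K] A) (hw : w ∈ relQ3 K (fun a => ι a) (fun a => ι a))
    (f g h : S) : ev3 K μ w f g h = 0 := by
  induction hw using Submodule.span_induction with
  | mem w hw =>
      rcases hw with ⟨a, x, y, z, rfl⟩ | ⟨a, x, y, z, rfl⟩ <;>
        simp only [st8_ev3_sub, st8_ev3_tmul, st8_ev2_tmul, hbl] <;> ring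
  | zero => simp
  | add w₁ w₂ _ _ h₁ h₂ => simp [map_add, h₁, h₂]
  | smul c w _ h₁ => simp [map_smul, h₁]

lemma st8_e2_rel (hbl : ∀ (a : S) (h : A) (b : S), μ (ι a * h) b = a * μ h b)
    (ε : A →ₗ[K] S) (hε : ∀ D : A, ε D = μ D 1)
    (u : A ⊗[K] A) (hu : u ∈ relQ K (fun a => ι a) (fun a => ι a)) :
    e2 K ι.toLinearMap ε u = 0 := by
  induction hu using Submodule.span_induction with
  | mem u hu =>
      obtain ⟨a, x, y, rfl⟩ := hu
      rw [map_sub, st8_e2_tmul, st8_e2_tmul, sub_eq_zero]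
      have h1 : ε (ι a * y) = a * ε y := by rw [hε, hε, hbl]
      rw [h1, AlgHom.toLinearMap_apply, AlgHom.toLinearMap_apply, map_mul,
        ← mul_assoc, ← map_mul, ← map_mul, mul_comm (ε y) a]
  | zero => simp
  | add w₁ w₂ _ _ h₁ h₂ => simp [map_add, h₁, h₂]
  | smul c w _ h₁ => simp [map_smul, h₁]

lemma st8_mu_e1 (hbl : ∀ (a : S) (h : A) (b : S), μ (ι a * h) b = a * μ h b)
    (ε : A →ₗ[K] S) (hε : ∀ D : A, ε D = μ D 1)
    (u : A ⊗[K] A) (x : S) :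
    μ (e1 K ι.toLinearMap ε u) x = ev2 K μ u 1 x := by
  induction u using TensorProduct.induction_on with
  | zero => simp
  | tmul a b =>
      rw [st8_e1_tmul, st8_ev2_tmul, AlgHom.toLinearMap_apply, hbl, hε]
  | add u₁ u₂ h₁ h₂ => simp only [map_add, LinearMap.add_apply, h₁, h₂]

lemma st8_mu_e2 (hbl : ∀ (a : S) (h : A) (b : S), μ (ι a * h) b = a * μ h b)
    (ε : A →ₗ[K] S) (hε : ∀ D : A, ε D = μ D 1)
    (u : A ⊗[K] A) (x : S) :
    μ (e2 K ι.toLinearMap ε u) x = ev2 K μ u x 1 := by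
  induction u using TensorProduct.induction_on with
  | zero => simp
  | tmul a b =>
      rw [st8_e2_tmul, st8_ev2_tmul, AlgHom.toLinearMap_apply, hbl, hε, mul_comm]
  | add u₁ u₂ h₁ h₂ => simp only [map_add, LinearMap.add_apply, h₁, h₂]

lemma st8_mu_inj
    (hbl : ∀ (a : S) (h : A) (b : S), μ (ι a * h) b = a * μ h b)
    (ε : A →ₗ[K] S) (hε : ∀ D : A, ε D = μ D 1)
    (hfaith2 : ∀ u : A ⊗[K] A,
      (∀ f g : S, ev2 K μ u f g = 0) → prQ K (fun a => ι a) (fun a => ι a) u = 0)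
    (h : A) (hh : ∀ f : S, μ h f = 0) : h = 0 := by
  have h2 : prQ K (fun a => ι a) (fun a => ι a) (h ⊗ₜ[K] (1 : A)) = 0 := by
    apply hfaith2
    intro f g
    rw [st8_ev2_tmul, hh, zero_mul]
  have h3 : (h ⊗ₜ[K] (1 : A)) ∈ relQ K (fun a => ι a) (fun a => ι a) := by
    rwa [prQ, Submodule.mkQ_apply, Submodule.Quotient.mk_eq_zero] at h2
  have h4 := st8_e2_rel μ ι hbl ε hε _ h3
  have h5 : ε (1 : A) = 1 := by rw [hε]; simp
  rw [st8_e2_tmul, h5, AlgHom.toLinearMap_apply, map_one, one_mul] at h4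
  exact h4

lemma st8_sum_anti_snd0 {M : Type*} [AddCommMonoid M] (G : ℕ → M) (m : ℕ) :
    ∑ q ∈ Finset.HasAntidiagonal.antidiagonal m, (if q.2 = 0 then G q.1 else 0) = G m := by
  rw [Finset.sum_eq_single (m, 0)]
  · simp
  · rintro ⟨a, b⟩ hm hne
    rw [Finset.HasAntidiagonal.mem_antidiagonal] at hm
    have : ¬ b = 0 := by rintro rfl; exact hne (by simp [← hm])
    simp [this]
  · intro hm; exact absurd (Finset.HasAntidiagonal.mem_antidiagonal.2 (by simp)) hm

lemma st8_sum_anti_fst0 {M : Type*} [AddCommMonoid M] (G : ℕ → M) (m : ℕ) :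
    ∑ q ∈ Finset.HasAntidiagonal.antidiagonal m, (if q.1 = 0 then G q.2 else 0) = G m := by
  rw [Finset.sum_eq_single (0, m)]
  · simp
  · rintro ⟨a, b⟩ hm hne
    rw [Finset.HasAntidiagonal.mem_antidiagonal] at hm
    have : ¬ a = 0 := by rintro rfl; exact hne (by simp at hm ⊢; omega)
    simp [this]
  · intro hm; exact absurd (Finset.HasAntidiagonal.mem_antidiagonal.2 (by simp)) hm

lemma st8_flatA {M : Type*} [AddCommMonoid M] (F : ℕ → ℕ → ℕ → M) (n : ℕ) :
    ∑ p ∈ Finset.HasAntidiagonal.antidiagonal n, ∑ q ∈ Finset.HasAntidiagonal.antidiagonal p.2, F p.1 q.1 q.2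
  = ∑ p ∈ Finset.HasAntidiagonal.antidiagonal n, ∑ q ∈ Finset.HasAntidiagonal.antidiagonal p.1, F q.1 q.2 p.2 := by
  rw [Finset.sum_sigma', Finset.sum_sigma']
  refine Finset.sum_nbij' (fun x => ⟨(x.1.1 + x.2.1, x.2.2), (x.1.1, x.2.1)⟩)
    (fun x => ⟨(x.2.1, x.2.2 + x.1.2), (x.2.2, x.1.2)⟩) ?_ ?_ ?_ ?_ ?_
  · rintro ⟨⟨a, w⟩, ⟨b, c⟩⟩ hm
    simp only [Finset.mem_sigma, Finset.HasAntidiagonal.mem_antidiagonal, and_true, true_and] at hm ⊢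
    omega
  · rintro ⟨⟨a, w⟩, ⟨b, c⟩⟩ hm
    simp only [Finset.mem_sigma, Finset.HasAntidiagonal.mem_antidiagonal, and_true, true_and] at hm ⊢
    omega
  · rintro ⟨⟨a, w⟩, ⟨b, c⟩⟩ hm
    simp only [Finset.mem_sigma, Finset.HasAntidiagonal.mem_antidiagonal] at hm
    obtain ⟨h1, h2⟩ := hm; subst h2; rfl
  · rintro ⟨⟨a, w⟩, ⟨b, c⟩⟩ hm
    simp only [Finset.mem_sigma, Finset.HasAntidiagonal.mem_antidiagonal] at hm
    obtain ⟨h1, h2⟩ := hm; subst h2; rfl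
  · rintro ⟨⟨a, w⟩, ⟨b, c⟩⟩ _; rfl

lemma st8_flatB {M : Type*} [AddCommMonoid M] (F : ℕ → ℕ → ℕ → M) (n : ℕ) :
    ∑ p ∈ Finset.HasAntidiagonal.antidiagonal n, ∑ q ∈ Finset.HasAntidiagonal.antidiagonal p.2, F p.1 q.1 q.2
  = ∑ p ∈ Finset.HasAntidiagonal.antidiagonal n, ∑ q ∈ Finset.HasAntidiagonal.antidiagonal p.2, F q.1 p.1 q.2 := by
  calc ∑ p ∈ Finset.HasAntidiagonal.antidiagonal n, ∑ q ∈ Finset.HasAntidiagonal.antidiagonal p.2, F p.1 q.1 q.2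
      = ∑ p ∈ Finset.HasAntidiagonal.antidiagonal n, ∑ q ∈ Finset.HasAntidiagonal.antidiagonal p.1, F q.1 q.2 p.2 :=
        st8_flatA F n
    _ = ∑ p ∈ Finset.HasAntidiagonal.antidiagonal n, ∑ q ∈ Finset.HasAntidiagonal.antidiagonal p.1, F q.2 q.1 p.2 :=
        Finset.sum_congr rfl fun p _ =>
          (Finset.Nat.sum_antidiagonal_swap (f := fun q => F q.1 q.2 p.2)).symm
    _ = ∑ p ∈ Finset.HasAntidiagonal.antidiagonal n, ∑ q ∈ Finset.HasAntidiagonal.antidiagonal p.2, F q.1 p.1 q.2 :=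
        (st8_flatA (fun a b c => F b a c) n).symm

variable (B : ℕ → A ⊗[K] A)

lemma st8_starC_d1left (f : ℕ → S) (n : ℕ) :
    starC K μ B (fun n => if n = 0 then 1 else 0) f n
      = ∑ p ∈ Finset.HasAntidiagonal.antidiagonal n, ev2 K μ (B p.1) 1 (f p.2) := by
  unfold starC
  refine Finset.sum_congr rfl fun p _ => ?_
  rw [show (∑ q ∈ Finset.HasAntidiagonal.antidiagonal p.2,
        ev2 K μ (B p.1) (if q.1 = 0 then (1:S) else 0) (f q.2))
      = ∑ q ∈ Finset.HasAntidiagonal.antidiagonal p.2,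
        (if q.1 = 0 then ev2 K μ (B p.1) 1 (f q.2) else 0) from
    Finset.sum_congr rfl fun q _ => by split <;> simp]
  exact st8_sum_anti_fst0 (fun c => ev2 K μ (B p.1) 1 (f c)) p.2

lemma st8_starC_d1right (f : ℕ → S) (n : ℕ) :
    starC K μ B f (fun n => if n = 0 then 1 else 0) n
      = ∑ p ∈ Finset.HasAntidiagonal.antidiagonal n, ev2 K μ (B p.1) (f p.2) 1 := by
  unfold starC
  refine Finset.sum_congr rfl fun p _ => ?_
  rw [show (∑ q ∈ Finset.HasAntidiagonal.antidiagonal p.2,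
        ev2 K μ (B p.1) (f q.1) (if q.2 = 0 then (1:S) else 0))
      = ∑ q ∈ Finset.HasAntidiagonal.antidiagonal p.2,
        (if q.2 = 0 then ev2 K μ (B p.1) (f q.1) 1 else 0) from
    Finset.sum_congr rfl fun q _ => by split <;> simp]
  exact st8_sum_anti_snd0 (fun c => ev2 K μ (B p.1) (f c) 1) p.2

lemma st8_unit_left_iff :
    (∀ f : ℕ → S, starC K μ B (fun n => if n = 0 then 1 else 0) f = f)
      ↔ (∀ (n : ℕ) (x : S), ev2 K μ (B n) 1 x = if n = 0 then x else 0) := by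
  constructor
  · intro hu n x
    have := congrFun (hu (fun i => if i = 0 then x else 0)) n
    rw [st8_starC_d1left] at this
    rw [show (∑ p ∈ Finset.HasAntidiagonal.antidiagonal n,
          ev2 K μ (B p.1) 1 (if p.2 = 0 then x else 0))
        = ∑ p ∈ Finset.HasAntidiagonal.antidiagonal n,
          (if p.2 = 0 then ev2 K μ (B p.1) 1 x else 0) from
      Finset.sum_congr rfl fun q _ => by split <;> simp,
      st8_sum_anti_snd0 (fun a => ev2 K μ (B a) 1 x) n] at this
    exact this
  · intro he f
    funext n
    rw [st8_starC_d1left]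
    rw [show (∑ p ∈ Finset.HasAntidiagonal.antidiagonal n, ev2 K μ (B p.1) 1 (f p.2))
        = ∑ p ∈ Finset.HasAntidiagonal.antidiagonal n, (if p.1 = 0 then f p.2 else 0) from
      Finset.sum_congr rfl fun q _ => by rw [he]]
    exact st8_sum_anti_fst0 f n

lemma st8_unit_right_iff :
    (∀ f : ℕ → S, starC K μ B f (fun n => if n = 0 then 1 else 0) = f)
      ↔ (∀ (n : ℕ) (x : S), ev2 K μ (B n) x 1 = if n = 0 then x else 0) := by
  constructor
  · intro hu n x
    have := congrFun (hu (fun i => if i = 0 then x else 0)) n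
    rw [st8_starC_d1right] at this
    rw [show (∑ p ∈ Finset.HasAntidiagonal.antidiagonal n,
          ev2 K μ (B p.1) (if p.2 = 0 then x else 0) 1)
        = ∑ p ∈ Finset.HasAntidiagonal.antidiagonal n,
          (if p.2 = 0 then ev2 K μ (B p.1) x 1 else 0) from
      Finset.sum_congr rfl fun q _ => by split <;> simp,
      st8_sum_anti_snd0 (fun a => ev2 K μ (B a) x 1) n] at this
    exact this
  · intro he f
    funext n
    rw [st8_starC_d1right]
    rw [show (∑ p ∈ Finset.HasAntidiagonal.antidiagonal n, ev2 K μ (B p.1) (f p.2) 1)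
        = ∑ p ∈ Finset.HasAntidiagonal.antidiagonal n, (if p.1 = 0 then f p.2 else 0) from
      Finset.sum_congr rfl fun q _ => by rw [he]]
    exact st8_sum_anti_fst0 f n

lemma st8_e1_iff (hbl : ∀ (a : S) (h : A) (b : S), μ (ι a * h) b = a * μ h b)
    (ε : A →ₗ[K] S) (hε : ∀ D : A, ε D = μ D 1)
    (hfaith2 : ∀ u : A ⊗[K] A,
      (∀ f g : S, ev2 K μ u f g = 0) → prQ K (fun a => ι a) (fun a => ι a) u = 0)
    (n : ℕ) :
    (e1 K ι.toLinearMap ε (B n) = if n = 0 then (1 : A) else 0)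
      ↔ (∀ x : S, ev2 K μ (B n) 1 x = if n = 0 then x else 0) := by
  constructor
  · intro he x
    rw [← st8_mu_e1 μ ι hbl ε hε, he]
    split <;> simp
  · intro he
    have key : ∀ x : S, μ (e1 K ι.toLinearMap ε (B n) - (if n = 0 then (1:A) else 0)) x = 0 := by
      intro x
      rw [map_sub, LinearMap.sub_apply, st8_mu_e1 μ ι hbl ε hε, he]
      split <;> simp
    have := st8_mu_inj μ ι hbl ε hε hfaith2 _ key
    rwa [sub_eq_zero] at this

lemma st8_e2_iff (hbl : ∀ (a : S) (h : A) (b : S), μ (ι a * h) b = a * μ h b)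
    (ε : A →ₗ[K] S) (hε : ∀ D : A, ε D = μ D 1)
    (hfaith2 : ∀ u : A ⊗[K] A,
      (∀ f g : S, ev2 K μ u f g = 0) → prQ K (fun a => ι a) (fun a => ι a) u = 0)
    (n : ℕ) :
    (e2 K ι.toLinearMap ε (B n) = if n = 0 then (1 : A) else 0)
      ↔ (∀ x : S, ev2 K μ (B n) x 1 = if n = 0 then x else 0) := by
  constructor
  · intro he x
    rw [← st8_mu_e2 μ ι hbl ε hε, he]
    split <;> simp
  · intro he
    have key : ∀ x : S, μ (e2 K ι.toLinearMap ε (B n) - (if n = 0 then (1:A) else 0)) x = 0 := by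
      intro x
      rw [map_sub, LinearMap.sub_apply, st8_mu_e2 μ ι hbl ε hε, he]
      split <;> simp
    have := st8_mu_inj μ ι hbl ε hε hfaith2 _ key
    rwa [sub_eq_zero] at this

lemma st8_cocycle_iff (hbl : ∀ (a : S) (h : A) (b : S), μ (ι a * h) b = a * μ h b)
    (hΔ : ∀ (D : A) (f g : S), ev2 K μ (Δ' D) f g = μ D (f * g))
    (hfaith3 : ∀ u : (A ⊗[K] A) ⊗[K] A,
      (∀ f g h : S, ev3 K μ u f g h = 0) →
        prQ3 K (fun a => ι a) (fun a => ι a) u = 0)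
    (n : ℕ) :
    (prQ3 K (fun a => ι a) (fun a => ι a)
        (∑ p ∈ Finset.HasAntidiagonal.antidiagonal n, DL K Δ' (B p.1) * (B p.2 ⊗ₜ[K] (1 : A)))
      = prQ3 K (fun a => ι a) (fun a => ι a)
        (∑ p ∈ Finset.HasAntidiagonal.antidiagonal n, DR K Δ' (B p.1) * aInv K ((1 : A) ⊗ₜ[K] B p.2)))
      ↔ (∀ f g h : S,
          ∑ p ∈ Finset.HasAntidiagonal.antidiagonal n, ev2 K μ (B p.1) (ev2 K μ (B p.2) f g) h
            = ∑ p ∈ Finset.HasAntidiagonal.antidiagonal n, ev2 K μ (B p.1) f (ev2 K μ (B p.2) g h)) := by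
  set U := ∑ p ∈ Finset.HasAntidiagonal.antidiagonal n, DL K Δ' (B p.1) * (B p.2 ⊗ₜ[K] (1 : A)) with hU
  set V := ∑ p ∈ Finset.HasAntidiagonal.antidiagonal n, DR K Δ' (B p.1) * aInv K ((1 : A) ⊗ₜ[K] B p.2) with hV
  have hUe : ∀ f g h : S, ev3 K μ U f g h
      = ∑ p ∈ Finset.HasAntidiagonal.antidiagonal n, ev2 K μ (B p.1) (ev2 K μ (B p.2) f g) h := by
    intro f g h
    rw [hU]
    simp only [map_sum, LinearMap.sum_apply]
    exact Finset.sum_congr rfl fun p _ => st8_E1 μ Δ' hΔ _ _ f g h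
  have hVe : ∀ f g h : S, ev3 K μ V f g h
      = ∑ p ∈ Finset.HasAntidiagonal.antidiagonal n, ev2 K μ (B p.1) f (ev2 K μ (B p.2) g h) := by
    intro f g h
    rw [hV]
    simp only [map_sum, LinearMap.sum_apply]
    exact Finset.sum_congr rfl fun p _ => st8_E2 μ Δ' hΔ _ _ f g h
  constructor
  · intro hq f g h
    have hm : U - V ∈ relQ3 K (fun a => ι a) (fun a => ι a) := by
      rw [prQ3, Submodule.mkQ_apply, Submodule.mkQ_apply] at hq
      exact (Submodule.Quotient.eq _).mp hq
    have h0 := st8_ev3_rel μ ι hbl _ hm f g h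
    rw [st8_ev3_sub, hUe, hVe, sub_eq_zero] at h0
    exact h0
  · intro hs
    have h0 : prQ3 K (fun a => ι a) (fun a => ι a) (U - V) = 0 := by
      apply hfaith3
      intro f g h
      rw [st8_ev3_sub, hUe, hVe, sub_eq_zero]
      exact hs f g h
    rw [map_sub, sub_eq_zero] at h0
    exact h0

lemma st8_starC_delta00 (x y : S) :
    starC K μ B (fun n => if n = 0 then x else 0) (fun n => if n = 0 then y else 0)
      = fun m => ev2 K μ (B m) x y := by
  funext m
  unfold starC
  rw [show (∑ p ∈ Finset.HasAntidiagonal.antidiagonal m, ∑ q ∈ Finset.HasAntidiagonal.antidiagonal p.2,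
        ev2 K μ (B p.1) (if q.1 = 0 then x else 0) (if q.2 = 0 then y else 0))
      = ∑ p ∈ Finset.HasAntidiagonal.antidiagonal m, ∑ q ∈ Finset.HasAntidiagonal.antidiagonal p.2,
        (if q.1 = 0 then (if q.2 = 0 then ev2 K μ (B p.1) x y else 0) else 0) from
    Finset.sum_congr rfl fun p _ => Finset.sum_congr rfl fun q _ => by
      split <;> split <;> simp]
  rw [show (∑ p ∈ Finset.HasAntidiagonal.antidiagonal m, ∑ q ∈ Finset.HasAntidiagonal.antidiagonal p.2,
        (if q.1 = 0 then (if q.2 = 0 then ev2 K μ (B p.1) x y else 0) else 0))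
      = ∑ p ∈ Finset.HasAntidiagonal.antidiagonal m,
        (if p.2 = 0 then ev2 K μ (B p.1) x y else 0) from
    Finset.sum_congr rfl fun p _ =>
      st8_sum_anti_fst0 (fun c => if c = 0 then ev2 K μ (B p.1) x y else 0) p.2]
  exact st8_sum_anti_snd0 (fun a => ev2 K μ (B a) x y) m

lemma st8_orderwise_of_assoc
    (hA : ∀ f g h : ℕ → S,
      starC K μ B (starC K μ B f g) h = starC K μ B f (starC K μ B g h))
    (n : ℕ) (x y z : S) :
    ∑ p ∈ Finset.HasAntidiagonal.antidiagonal n, ev2 K μ (B p.1) (ev2 K μ (B p.2) x y) z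
      = ∑ p ∈ Finset.HasAntidiagonal.antidiagonal n, ev2 K μ (B p.1) x (ev2 K μ (B p.2) y z) := by
  have := congrFun (hA (fun i => if i = 0 then x else 0) (fun i => if i = 0 then y else 0)
    (fun i => if i = 0 then z else 0)) n
  rw [st8_starC_delta00] at this
  conv_rhs at this => rw [starC]
  rw [show starC K μ B (fun m => ev2 K μ (B m) x y) (fun i => if i = 0 then z else 0) n
      = ∑ p ∈ Finset.HasAntidiagonal.antidiagonal n, ev2 K μ (B p.1) (ev2 K μ (B p.2) x y) z from ?_] at this
  rw [show (∑ p ∈ Finset.HasAntidiagonal.antidiagonal n, ∑ q ∈ Finset.HasAntidiagonal.antidiagonal p.2,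
        ev2 K μ (B p.1) (if q.1 = 0 then x else 0) ((starC K μ B
          (fun i => if i = 0 then y else 0) (fun i => if i = 0 then z else 0)) q.2))
      = ∑ p ∈ Finset.HasAntidiagonal.antidiagonal n, ev2 K μ (B p.1) x (ev2 K μ (B p.2) y z) from ?_] at this
  · exact this
  · rw [st8_starC_delta00]
    refine Eq.trans (Finset.sum_congr rfl fun p _ => ?_)
      (Finset.sum_congr rfl fun p _ =>
        st8_sum_anti_fst0 (fun c => ev2 K μ (B p.1) x (ev2 K μ (B c) y z)) p.2)
    refine Finset.sum_congr rfl fun q _ => ?_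
    by_cases hq : q.1 = 0 <;> simp [hq]
  · unfold starC
    refine Eq.trans (Finset.sum_congr rfl fun p _ => ?_)
      (Finset.sum_congr rfl fun p _ =>
        st8_sum_anti_snd0 (fun c => ev2 K μ (B p.1) (ev2 K μ (B c) x y) z) p.2)
    refine Finset.sum_congr rfl fun q _ => ?_
    by_cases hq : q.2 = 0 <;> simp [hq]

lemma st8_assoc_chain (E : ℕ → S →ₗ[K] S →ₗ[K] S)
    (H : ∀ (m : ℕ) (x y z : S),
      ∑ r ∈ Finset.HasAntidiagonal.antidiagonal m, E r.1 (E r.2 x y) z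
        = ∑ r ∈ Finset.HasAntidiagonal.antidiagonal m, E r.1 x (E r.2 y z))
    (f g h : ℕ → S) (n : ℕ) :
    ∑ p ∈ Finset.HasAntidiagonal.antidiagonal n, ∑ q ∈ Finset.HasAntidiagonal.antidiagonal p.2,
      E p.1 (∑ r ∈ Finset.HasAntidiagonal.antidiagonal q.1, ∑ s ∈ Finset.HasAntidiagonal.antidiagonal r.2,
        E r.1 (f s.1) (g s.2)) (h q.2)
    = ∑ p ∈ Finset.HasAntidiagonal.antidiagonal n, ∑ q ∈ Finset.HasAntidiagonal.antidiagonal p.2,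
      E p.1 (f q.1) (∑ r ∈ Finset.HasAntidiagonal.antidiagonal q.2, ∑ s ∈ Finset.HasAntidiagonal.antidiagonal r.2,
        E r.1 (g s.1) (h s.2)) := by
  calc
    ∑ p ∈ Finset.HasAntidiagonal.antidiagonal n, ∑ q ∈ Finset.HasAntidiagonal.antidiagonal p.2,
      E p.1 (∑ r ∈ Finset.HasAntidiagonal.antidiagonal q.1, ∑ s ∈ Finset.HasAntidiagonal.antidiagonal r.2,
        E r.1 (f s.1) (g s.2)) (h q.2)
      = ∑ p ∈ Finset.HasAntidiagonal.antidiagonal n, ∑ q ∈ Finset.HasAntidiagonal.antidiagonal p.1,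
          E q.1 (∑ r ∈ Finset.HasAntidiagonal.antidiagonal q.2, ∑ s ∈ Finset.HasAntidiagonal.antidiagonal r.2,
            E r.1 (f s.1) (g s.2)) (h p.2) :=
        st8_flatA (fun a b c => E a (∑ r ∈ Finset.HasAntidiagonal.antidiagonal b,
          ∑ s ∈ Finset.HasAntidiagonal.antidiagonal r.2, E r.1 (f s.1) (g s.2)) (h c)) n
    _ = ∑ p ∈ Finset.HasAntidiagonal.antidiagonal n, ∑ q ∈ Finset.HasAntidiagonal.antidiagonal p.1,
          ∑ r ∈ Finset.HasAntidiagonal.antidiagonal q.2, ∑ s ∈ Finset.HasAntidiagonal.antidiagonal r.2,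
            E q.1 (E r.1 (f s.1) (g s.2)) (h p.2) := by
        refine Finset.sum_congr rfl fun p _ => Finset.sum_congr rfl fun q _ => ?_
        simp only [map_sum, LinearMap.sum_apply]
    _ = ∑ p ∈ Finset.HasAntidiagonal.antidiagonal n, ∑ q ∈ Finset.HasAntidiagonal.antidiagonal p.1,
          ∑ r ∈ Finset.HasAntidiagonal.antidiagonal q.1, ∑ s ∈ Finset.HasAntidiagonal.antidiagonal q.2,
            E r.1 (E r.2 (f s.1) (g s.2)) (h p.2) :=
        Finset.sum_congr rfl fun p _ =>
          st8_flatA (fun a e u => ∑ s ∈ Finset.HasAntidiagonal.antidiagonal u,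
            E a (E e (f s.1) (g s.2)) (h p.2)) p.1
    _ = ∑ p ∈ Finset.HasAntidiagonal.antidiagonal n, ∑ q ∈ Finset.HasAntidiagonal.antidiagonal p.1,
          ∑ s ∈ Finset.HasAntidiagonal.antidiagonal q.2, ∑ r ∈ Finset.HasAntidiagonal.antidiagonal q.1,
            E r.1 (E r.2 (f s.1) (g s.2)) (h p.2) :=
        Finset.sum_congr rfl fun p _ => Finset.sum_congr rfl fun q _ =>
          Finset.sum_comm
    _ = ∑ p ∈ Finset.HasAntidiagonal.antidiagonal n, ∑ q ∈ Finset.HasAntidiagonal.antidiagonal p.1,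
          ∑ s ∈ Finset.HasAntidiagonal.antidiagonal q.2, ∑ r ∈ Finset.HasAntidiagonal.antidiagonal q.1,
            E r.1 (f s.1) (E r.2 (g s.2) (h p.2)) :=
        Finset.sum_congr rfl fun p _ => Finset.sum_congr rfl fun q _ =>
          Finset.sum_congr rfl fun s _ => H q.1 (f s.1) (g s.2) (h p.2)
    _ = ∑ p ∈ Finset.HasAntidiagonal.antidiagonal n, ∑ q ∈ Finset.HasAntidiagonal.antidiagonal p.1,
          ∑ r ∈ Finset.HasAntidiagonal.antidiagonal q.1, ∑ s ∈ Finset.HasAntidiagonal.antidiagonal q.2,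
            E r.1 (f s.1) (E r.2 (g s.2) (h p.2)) :=
        Finset.sum_congr rfl fun p _ => Finset.sum_congr rfl fun q _ =>
          Finset.sum_comm
    _ = ∑ p ∈ Finset.HasAntidiagonal.antidiagonal n, ∑ q ∈ Finset.HasAntidiagonal.antidiagonal p.1,
          ∑ r ∈ Finset.HasAntidiagonal.antidiagonal q.2, ∑ s ∈ Finset.HasAntidiagonal.antidiagonal r.2,
            E q.1 (f s.1) (E r.1 (g s.2) (h p.2)) :=
        Finset.sum_congr rfl fun p _ =>
          (st8_flatA (fun a e w => ∑ s ∈ Finset.HasAntidiagonal.antidiagonal w,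
            E a (f s.1) (E e (g s.2) (h p.2))) p.1).symm
    _ = ∑ p ∈ Finset.HasAntidiagonal.antidiagonal n, ∑ q ∈ Finset.HasAntidiagonal.antidiagonal p.2,
          ∑ r ∈ Finset.HasAntidiagonal.antidiagonal q.1, ∑ s ∈ Finset.HasAntidiagonal.antidiagonal r.2,
            E p.1 (f s.1) (E r.1 (g s.2) (h q.2)) :=
        (st8_flatA (fun a w d => ∑ r ∈ Finset.HasAntidiagonal.antidiagonal w,
          ∑ s ∈ Finset.HasAntidiagonal.antidiagonal r.2, E a (f s.1) (E r.1 (g s.2) (h d))) n).symm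
    _ = ∑ p ∈ Finset.HasAntidiagonal.antidiagonal n, ∑ q ∈ Finset.HasAntidiagonal.antidiagonal p.2,
          ∑ r ∈ Finset.HasAntidiagonal.antidiagonal q.2, ∑ s ∈ Finset.HasAntidiagonal.antidiagonal r.1,
            E p.1 (f s.1) (E q.1 (g s.2) (h r.2)) :=
        Finset.sum_congr rfl fun p _ =>
          (st8_flatA (fun e w d => ∑ s ∈ Finset.HasAntidiagonal.antidiagonal w,
            E p.1 (f s.1) (E e (g s.2) (h d))) p.2).symm
    _ = ∑ p ∈ Finset.HasAntidiagonal.antidiagonal n, ∑ q ∈ Finset.HasAntidiagonal.antidiagonal p.2,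
          ∑ r ∈ Finset.HasAntidiagonal.antidiagonal q.2, ∑ s ∈ Finset.HasAntidiagonal.antidiagonal r.2,
            E p.1 (f r.1) (E q.1 (g s.1) (h s.2)) :=
        Finset.sum_congr rfl fun p _ => Finset.sum_congr rfl fun q _ =>
          (st8_flatA (fun i j d => E p.1 (f i) (E q.1 (g j) (h d))) q.2).symm
    _ = ∑ p ∈ Finset.HasAntidiagonal.antidiagonal n, ∑ q ∈ Finset.HasAntidiagonal.antidiagonal p.2,
          ∑ r ∈ Finset.HasAntidiagonal.antidiagonal q.2, ∑ s ∈ Finset.HasAntidiagonal.antidiagonal r.2,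
            E p.1 (f q.1) (E r.1 (g s.1) (h s.2)) :=
        Finset.sum_congr rfl fun p _ =>
          st8_flatB (fun e i v => ∑ s ∈ Finset.HasAntidiagonal.antidiagonal v,
            E p.1 (f i) (E e (g s.1) (h s.2))) p.2
    _ = ∑ p ∈ Finset.HasAntidiagonal.antidiagonal n, ∑ q ∈ Finset.HasAntidiagonal.antidiagonal p.2,
          E p.1 (f q.1) (∑ r ∈ Finset.HasAntidiagonal.antidiagonal q.2,
            ∑ s ∈ Finset.HasAntidiagonal.antidiagonal r.2, E r.1 (g s.1) (h s.2)) := by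
        refine Finset.sum_congr rfl fun p _ => Finset.sum_congr rfl fun q _ => ?_
        simp only [map_sum]

lemma st8_assoc_of_orderwise
    (H : ∀ (m : ℕ) (x y z : S),
      ∑ r ∈ Finset.HasAntidiagonal.antidiagonal m, ev2 K μ (B r.1) (ev2 K μ (B r.2) x y) z
        = ∑ r ∈ Finset.HasAntidiagonal.antidiagonal m, ev2 K μ (B r.1) x (ev2 K μ (B r.2) y z))
    (f g h : ℕ → S) :
    starC K μ B (starC K μ B f g) h = starC K μ B f (starC K μ B g h) := by
  funext n
  exact st8_assoc_chain (fun a => ev2 K μ (B a)) H f g h n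

end Aux

/-- Example 4.1.  Let `P` be a smooth manifold, `H = D(P)` the
algebra of differential operators, `R = C^∞(P)` (axiomatized here by: `R` is
commutative, `ι : R → H` realizes functions as operators, the anchor `μ` is the
tautological action, `Δ(D)(f,g) = D(fg)`, `ε(D) = D(1)`, and elements of
`H ⊗_R H`, `H ⊗_R H ⊗_R H` are faithfully determined by their action on
functions).  A formal series `F = 1 ⊗ 1 + ℏB₁ + ℏ²B₂ + ⋯` of bidifferential
operators is a twistor of the Hopf algebroid `D[[ℏ]]` if and only if
`f *_ℏ g := F(f, g)` is associative on `R[[ℏ]]` with unit the constant function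
`1`, i.e. `*_ℏ` is a star product on `P`. -/
theorem statement8
    (k H R : Type) [CommRing k] [Ring H] [Algebra k H] [CommRing R] [Algebra k R]
    (ι : R →ₐ[k] H) (μ : H →ₐ[k] Module.End k R)
    -- the anchor extends the multiplication action of functions:
    (hμι : ∀ a b : R, μ (ι a) b = a * b)
    (hbl : ∀ (a : R) (h : H) (b : R), μ (ι a * h) b = a * μ h b)
    -- the counit is `D ↦ D(1)`:
    (ε : H →ₗ[k] R) (hε : ∀ D : H, ε D = μ D 1)
    -- the coproduct of a differential operator is determined by `Δ(D)(f,g) = D(fg)`: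
    (Δ' : H →ₗ[k] H ⊗[k] H)
    (hΔ : ∀ (D : H) (f g : R), ev2 k μ (Δ' D) f g = μ D (f * g))
    -- bidifferential and tridifferential operators are determined by their values
    -- on functions (modulo the relations defining `⊗_R`):
    (hfaith2 : ∀ u : H ⊗[k] H,
      (∀ f g : R, ev2 k μ u f g = 0) → prQ k (fun a => ι a) (fun a => ι a) u = 0)
    (hfaith3 : ∀ u : (H ⊗[k] H) ⊗[k] H,
      (∀ f g h : R, ev3 k μ u f g h = 0) →
        prQ3 k (fun a => ι a) (fun a => ι a) u = 0)
    -- the formal series `F = 1⊗1 + ℏB₁ + ⋯`: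
    (B : ℕ → H ⊗[k] H) (hB0 : B 0 = 1) :
    -- `F` is a twistor (cocycle and counit identities, order by order in `ℏ`;
    -- invertibility is automatic since `B 0 = 1 ⊗ 1`)  ↔  `*_ℏ` is a star product:
    (((∀ n : ℕ,
        prQ3 k (fun a => ι a) (fun a => ι a)
          (∑ p ∈ Finset.HasAntidiagonal.antidiagonal n,
            DL k Δ' (B p.1) * (B p.2 ⊗ₜ[k] (1 : H)))
        = prQ3 k (fun a => ι a) (fun a => ι a)
          (∑ p ∈ Finset.HasAntidiagonal.antidiagonal n,
            DR k Δ' (B p.1) * aInv k ((1 : H) ⊗ₜ[k] B p.2)))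
      ∧ (∀ n : ℕ,
          e1 k ι.toLinearMap ε (B n) = (if n = 0 then (1 : H) else 0)
          ∧ e2 k ι.toLinearMap ε (B n) = (if n = 0 then (1 : H) else 0)))
    ↔
    ((∀ f g h : ℕ → R,
        starC k μ B (starC k μ B f g) h = starC k μ B f (starC k μ B g h))
      ∧ (∀ f : ℕ → R,
          starC k μ B (fun n => if n = 0 then 1 else 0) f = f
          ∧ starC k μ B f (fun n => if n = 0 then 1 else 0) = f))) := by
  constructor
  · rintro ⟨hc, he⟩
    refine ⟨fun f g h => st8_assoc_of_orderwise μ B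
      (fun m x y z => (st8_cocycle_iff μ Δ' ι B hbl hΔ hfaith3 m).mp (hc m) x y z) f g h,
      fun f => ⟨?_, ?_⟩⟩
    · exact (st8_unit_left_iff μ B).mpr
        (fun n x => (st8_e1_iff μ ι B hbl ε hε hfaith2 n).mp (he n).1 x) f
    · exact (st8_unit_right_iff μ B).mpr
        (fun n x => (st8_e2_iff μ ι B hbl ε hε hfaith2 n).mp (he n).2 x) f
  · rintro ⟨ha, hu⟩
    refine ⟨fun n => (st8_cocycle_iff μ Δ' ι B hbl hΔ hfaith3 n).mpr
      (fun f g h => st8_orderwise_of_assoc μ B ha n f g h), fun n => ⟨?_, ?_⟩⟩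
    · exact (st8_e1_iff μ ι B hbl ε hε hfaith2 n).mpr
        (fun x => (st8_unit_left_iff μ B).mp (fun f => (hu f).1) n x)
    · exact (st8_e2_iff μ ι B hbl ε hε hfaith2 n).mpr
        (fun x => (st8_unit_right_iff μ B).mp (fun f => (hu f).2) n x)


end
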